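/- Let (V,β,ρ,μ) be a representation of a Hom-pre-Lie algebra (A,·,α) on a finite-dimensional vector space V with β invertible, and let ρ⋆, μ⋆ : A → gl(V*) be given by ⟨ρ⋆(x)(ξ), u⟩ = −⟨ξ, β^{-2}(ρ(α(x))(u))⟩ and ⟨μ⋆(x)(ξ), u⟩ = −⟨ξ, β^{-2}(μ(α(x))(u))⟩. Then applying the same dual-representation construction to (V*, (β^{-1})*, ρ⋆ − μ⋆, −μ⋆) and identifying (V*)* with V canonically, one recovers (V, β, ρ, μ): that is, ((ρ⋆−μ⋆)⋆ − (−μ⋆)⋆, −(−μ⋆)⋆) = (ρ, μ) and (((β^{-1})*)^{-1})* = β under the canonical identification. -/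

import Mathlib

/-- A Hom-pre-Lie algebra structure on `A`: a bilinear product and an algebra
morphism `α` satisfying the Hom-pre-Lie identity. -/
def IsHomPreLie {K A : Type*} [Field K] [AddCommGroup A] [Module K A]
    (mul : A →ₗ[K] A →ₗ[K] A) (α : A →ₗ[K] A) : Prop :=
  (∀ x y, α (mul x y) = mul (α x) (α y)) ∧
  (∀ x y z, mul (mul x y) (α z) - mul (α x) (mul y z)
      = mul (mul y x) (α z) - mul (α y) (mul x z))

/-- A representation of a Hom-Lie algebra `(L, bracket, α)` on `V` with respect to `β`. -/
def IsHomLieRep {K L V : Type*} [Field K] [AddCommGroup L] [Module K L]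
    [AddCommGroup V] [Module K V]
    (bracket : L →ₗ[K] L →ₗ[K] L) (α : L →ₗ[K] L)
    (β : V →ₗ[K] V) (ρ : L →ₗ[K] Module.End K V) : Prop :=
  (∀ x, ρ (α x) ∘ₗ β = β ∘ₗ ρ x) ∧
  (∀ x y, ρ (bracket x y) ∘ₗ β = ρ (α x) ∘ₗ ρ y - ρ (α y) ∘ₗ ρ x)

/-- A representation `(V, β, ρ, μ)` of a Hom-pre-Lie algebra `(A, mul, α)`:
`ρ` is a representation of the sub-adjacent Hom-Lie algebra (whose bracket is the
commutator `mul - mul.flip`) with respect to `β`, together with the two compatibility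
conditions for `μ`. -/
def IsHomPreLieRep {K A V : Type*} [Field K] [AddCommGroup A] [Module K A]
    [AddCommGroup V] [Module K V]
    (mul : A →ₗ[K] A →ₗ[K] A) (α : A →ₗ[K] A)
    (β : V →ₗ[K] V) (ρ μ : A →ₗ[K] Module.End K V) : Prop :=
  IsHomLieRep (mul - mul.flip) α β ρ ∧
  (∀ x, β ∘ₗ μ x = μ (α x) ∘ₗ β) ∧
  (∀ x y, μ (α y) ∘ₗ μ x - μ (mul x y) ∘ₗ β = μ (α y) ∘ₗ ρ x - ρ (α x) ∘ₗ μ y)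

/-- The twisted dual map `ρ⋆ : A → gl(V*)`, defined by
`⟨ρ⋆(x)(ξ), u⟩ = −⟨ξ, β⁻²(ρ(α(x))(u))⟩`. -/
noncomputable def starRep {K A V : Type*} [Field K] [AddCommGroup A] [Module K A]
    [AddCommGroup V] [Module K V]
    (α : A →ₗ[K] A) (β : V ≃ₗ[K] V) (ρ : A →ₗ[K] Module.End K V) :
    A →ₗ[K] Module.End K (V →ₗ[K] K) where
  toFun x := - (((β.symm.toLinearMap ∘ₗ β.symm.toLinearMap) ∘ₗ ρ (α x)).dualMap :
      Module.End K (Module.Dual K V))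
  map_add' x y := by
    ext ξ u
    simp [LinearMap.dualMap_apply]
    abel
  map_smul' c x := by
    ext ξ u
    simp [LinearMap.dualMap_apply]

/-- Port note: current instance search no longer finds Mathlib's `LinearMap.addCommGroup`
on `A →ₗ[K] Module.End K (V →ₗ[K] K)`; supply exactly that instance. -/
instance addCommGroupLinearMapEndDual {K A V : Type*} [Field K] [AddCommGroup A] [Module K A]
    [AddCommGroup V] [Module K V] :
    AddCommGroup (A →ₗ[K] Module.End K (V →ₗ[K] K)) :=
  @LinearMap.addCommGroup K K A (Module.End K (V →ₗ[K] K)) _ _ _ inferInstance _ _ (RingHom.id K)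

/-- Port note: the same for the double dual `(V →ₗ[K] K) →ₗ[K] K`. -/
instance addCommGroupLinearMapEndDoubleDual {K A V : Type*} [Field K] [AddCommGroup A]
    [Module K A] [AddCommGroup V] [Module K V] :
    AddCommGroup (A →ₗ[K] Module.End K ((V →ₗ[K] K) →ₗ[K] K)) :=
  @LinearMap.addCommGroup K K A (Module.End K ((V →ₗ[K] K) →ₗ[K] K)) _ _ _ inferInstance _ _
    (RingHom.id K)

/-- Let `(V,β,ρ,μ)` be a representation of a Hom-pre-Lie algebra
`(A,·,α)` on a finite-dimensional space `V`, with `β` invertible.  Applying the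
dual-representation construction twice and identifying `(V*)*` with `V` via the
canonical evaluation isomorphism recovers `(V, β, ρ, μ)`:
`((ρ⋆−μ⋆)⋆ − (−μ⋆)⋆, −(−μ⋆)⋆) = (ρ, μ)` and `(((β⁻¹)*)⁻¹)* = β`. -/
theorem double_dual_rep_eq
    {K A V : Type*} [Field K] [AddCommGroup A] [Module K A]
    [AddCommGroup V] [Module K V] [FiniteDimensional K V]
    (mul : A →ₗ[K] A →ₗ[K] A) (α : A ≃ₗ[K] A)
    (hA : IsHomPreLie mul (α : A →ₗ[K] A))
    (β : V ≃ₗ[K] V) (ρ μ : A →ₗ[K] Module.End K V)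
    (hrep : IsHomPreLieRep mul (α : A →ₗ[K] A) (β : V →ₗ[K] V) ρ μ) :
    -- the dual representation `(V*, (β⁻¹)*, ρ' = ρ⋆ − μ⋆, μ' = −μ⋆)`
    ∀ (ρ' μ' : A →ₗ[K] Module.End K (V →ₗ[K] K)) (β' : (V →ₗ[K] K) ≃ₗ[K] (V →ₗ[K] K)),
      ρ' = starRep (α : A →ₗ[K] A) β ρ - starRep (α : A →ₗ[K] A) β μ →
      μ' = - starRep (α : A →ₗ[K] A) β μ →
      β' = β.symm.dualMap →
      -- its dual representation, transported along the canonical evaluation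
      -- isomorphism `V ≃ (V*)*`, is the original representation `(V, β, ρ, μ)`:
      (∀ (x : A) (v : V),
          (starRep (α : A →ₗ[K] A) β' ρ' - starRep (α : A →ₗ[K] A) β' μ') x
              (Module.evalEquiv K V v)
            = Module.evalEquiv K V (ρ x v)) ∧
      (∀ (x : A) (v : V),
          (- starRep (α : A →ₗ[K] A) β' μ') x (Module.evalEquiv K V v)
            = Module.evalEquiv K V (μ x v)) ∧
      (∀ v : V, β'.symm.dualMap (Module.evalEquiv K V v)
            = Module.evalEquiv K V (β v)) := by
  intro ρ' μ' β' hρ' hμ' hβ'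
  subst hρ' hμ' hβ'
  have hβρ : ∀ x v, ρ (α x) (β v) = β (ρ x v) := fun x v =>
    LinearMap.congr_fun (hrep.1.1 x) v
  have hβμ : ∀ x v, μ (α x) (β v) = β (μ x v) := fun x v =>
    (LinearMap.congr_fun (hrep.2.1 x) v).symm
  have keyρ : ∀ x v, β.symm (β.symm (ρ (α (α x)) (β (β v)))) = ρ x v := by
    intro x v; rw [hβρ, hβρ]; simp
  have keyμ : ∀ x v, β.symm (β.symm (μ (α (α x)) (β (β v)))) = μ x v := by
    intro x v; rw [hβμ, hβμ]; simp
  have hsymm : (LinearEquiv.dualMap β.symm).symm = LinearEquiv.dualMap β := rfl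
  refine ⟨?_, ?_, ?_⟩
  · intro x v
    ext ξ
    erw [LinearMap.sub_apply]
    simp [starRep, hsymm, Module.evalEquiv, LinearEquiv.dualMap, ← keyρ x v, ← keyμ x v]
    erw [LinearMap.sub_apply, LinearMap.neg_apply]
    simp
    erw [LinearMap.neg_apply]
    simp
  · intro x v
    ext ξ
    erw [LinearMap.neg_apply]
    simp [starRep, hsymm, Module.evalEquiv, LinearEquiv.dualMap, ← keyμ x v]
    erw [LinearMap.neg_apply]
    simp
  · intro v
    ext ξ
    simp [hsymm, Module.evalEquiv, LinearEquiv.dualMap]
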